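/- Let Ω ⊆ ℝⁿ be open, let ζ : Ω → ℂ² be differentiable with ζ(x) a nonzero Majorana spinor for every x ∈ Ω, and suppose there are real-valued functions f_μ, c_μ : Ω → ℝ (μ = 1,…,n) such that ∂_μζ = f_μ·ζ + c_μ·(i·σ₃)·ζ on Ω. Then for every μ and every x ∈ Ω: (i) ∂_μ[N∘ζ](x) = 2·f_μ(x)·N(ζ(x)); (ii) ∂_μ[X_a∘ζ](x) = 2·c_μ(x)·Y_a(ζ(x)) for a = 1,2; and consequently (iii) c_μ(x) = ½·(Y₁(ζ(x))·∂_μ[X₁∘ζ](x) + Y₂(ζ(x))·∂_μ[X₂∘ζ](x)). -/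

import Mathlib

open Matrix Complex

noncomputable section

/-- Pauli matrix σ₁. -/
def σ1 : Matrix (Fin 2) (Fin 2) ℂ := !![0, 1; 1, 0]
/-- Pauli matrix σ₂. -/
def σ2 : Matrix (Fin 2) (Fin 2) ℂ := !![0, -I; I, 0]
/-- Pauli matrix σ₃. -/
def σ3 : Matrix (Fin 2) (Fin 2) ℂ := !![1, 0; 0, -1]

/-- A spinor ζ ∈ ℂ² is Majorana if conj(ζ) = i σ₁ ζ componentwise. -/
def IsMajorana (ζ : Fin 2 → ℂ) : Prop := star ζ = (I • σ1).mulVec ζ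

/-- The bilinear N(ζ) = ζ†ζ. -/
def Nbil (ζ : Fin 2 → ℂ) : ℂ := star ζ ⬝ᵥ ζ

/-- The bilinear X₁(ζ) = (ζ†σ₁ζ)/N(ζ). -/
def X1 (ζ : Fin 2 → ℂ) : ℂ := (star ζ ⬝ᵥ σ1.mulVec ζ) / Nbil ζ

/-- The bilinear X₂(ζ) = (ζ†σ₂ζ)/N(ζ). -/
def X2 (ζ : Fin 2 → ℂ) : ℂ := (star ζ ⬝ᵥ σ2.mulVec ζ) / Nbil ζ

/-- Y₁(ζ) = X₂(ζ). -/
def Y1 (ζ : Fin 2 → ℂ) : ℂ := X2 ζ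

/-- Y₂(ζ) = −X₁(ζ). -/
def Y2 (ζ : Fin 2 → ℂ) : ℂ := -X1 ζ

/-- The partial derivative in the μ-th coordinate direction of ℝⁿ. -/
def pderiv {n : ℕ} {E : Type*} [NormedAddCommGroup E] [NormedSpace ℝ E]
    (μ : Fin n) (f : (Fin n → ℝ) → E) (x : Fin n → ℝ) : E :=
  fderiv ℝ f x (Pi.single μ 1)

section helpers
variable {n : ℕ} {μ : Fin n} {x : Fin n → ℝ} {g h : (Fin n → ℝ) → ℂ}

theorem pderiv_eq' {E : Type*} [NormedAddCommGroup E] [NormedSpace ℝ E]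
    {f : (Fin n → ℝ) → E} {L : (Fin n → ℝ) →L[ℝ] E} (hf : HasFDerivAt f L x) :
    pderiv μ f x = L (Pi.single μ 1) := by
  rw [pderiv, hf.fderiv]

theorem pd_add (hg : DifferentiableAt ℝ g x) (hh : DifferentiableAt ℝ h x) :
    pderiv μ (fun y => g y + h y) x = pderiv μ g x + pderiv μ h x := by
  rw [pderiv_eq' (f := fun y => g y + h y) (hg.hasFDerivAt.add hh.hasFDerivAt)]; simp [pderiv]

theorem pd_mul (hg : DifferentiableAt ℝ g x) (hh : DifferentiableAt ℝ h x) :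
    pderiv μ (fun y => g y * h y) x = pderiv μ g x * h x + g x * pderiv μ h x := by
  rw [pderiv_eq' (f := fun y => g y * h y) (hg.hasFDerivAt.mul hh.hasFDerivAt)]; simp [pderiv]; ring

theorem pd_cmul (k : ℂ) (hh : DifferentiableAt ℝ h x) :
    pderiv μ (fun y => k * h y) x = k * pderiv μ h x := by
  rw [pderiv_eq' (hh.hasFDerivAt.const_mul k)]; simp [pderiv]

theorem pd_star (hg : DifferentiableAt ℝ g x) :
    pderiv μ (fun y => star (g y)) x = star (pderiv μ g x) := by
  rw [pderiv_eq' hg.hasFDerivAt.star]; simp [pderiv]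

theorem pd_inv (hh : DifferentiableAt ℝ h x) (h0 : h x ≠ 0) :
    pderiv μ (fun y => (h y)⁻¹) x = -(pderiv μ h x) / (h x) ^ 2 := by
  have H : HasFDerivAt (fun y => (h y)⁻¹)
      ((-ContinuousLinearMap.mulLeftRight ℝ ℂ (h x)⁻¹ (h x)⁻¹).comp (fderiv ℝ h x)) x :=
    (hasFDerivAt_inv' h0).comp x hh.hasFDerivAt
  rw [pderiv_eq' H]
  simp only [ContinuousLinearMap.comp_apply, ContinuousLinearMap.neg_apply,
    ContinuousLinearMap.mulLeftRight_apply, pderiv]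
  field_simp

theorem pd_div (hg : DifferentiableAt ℝ g x) (hh : DifferentiableAt ℝ h x) (h0 : h x ≠ 0) :
    pderiv μ (fun y => g y / h y) x
      = (pderiv μ g x * h x - g x * pderiv μ h x) / (h x) ^ 2 := by
  have e : (fun y => g y / h y) = fun y => g y * (h y)⁻¹ := by
    funext y; rw [div_eq_mul_inv]
  rw [e, pd_mul (h := fun y => (h y)⁻¹) hg (hh.inv h0), pd_inv hh h0]
  field_simp
  ring

theorem pd_proj {ζ : (Fin n → ℝ) → (Fin 2 → ℂ)} (hz : DifferentiableAt ℝ ζ x) (i : Fin 2) :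
    pderiv μ (fun y => ζ y i) x = pderiv μ ζ x i := by
  have H := (ContinuousLinearMap.proj (R := ℝ) (φ := fun _ : Fin 2 => ℂ) i).hasFDerivAt.comp
    x hz.hasFDerivAt
  rw [show (fun y => ζ y i)
      = (⇑(ContinuousLinearMap.proj (R := ℝ) (φ := fun _ : Fin 2 => ℂ) i) ∘ ζ) from rfl,
    pderiv_eq' H]
  simp [pderiv]

theorem diff_proj {ζ : (Fin n → ℝ) → (Fin 2 → ℂ)} (hz : DifferentiableAt ℝ ζ x) (i : Fin 2) :
    DifferentiableAt ℝ (fun y => ζ y i) x :=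
  ((ContinuousLinearMap.proj (R := ℝ) (φ := fun _ : Fin 2 => ℂ) i).hasFDerivAt.comp
    x hz.hasFDerivAt).differentiableAt

end helpers

theorem killing_spinor_bilinear_derivatives {n : ℕ} (Ω : Set (Fin n → ℝ))
    (hΩ : IsOpen Ω) (ζ : (Fin n → ℝ) → (Fin 2 → ℂ)) (hdiff : DifferentiableOn ℝ ζ Ω)
    (hζ : ∀ x ∈ Ω, ζ x ≠ 0 ∧ IsMajorana (ζ x))
    (f c : Fin n → (Fin n → ℝ) → ℝ)
    (hode : ∀ μ : Fin n, ∀ x ∈ Ω,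
      pderiv μ ζ x = (f μ x : ℂ) • ζ x + (c μ x : ℂ) • (I • σ3).mulVec (ζ x)) :
    ∀ μ : Fin n, ∀ x ∈ Ω,
      pderiv μ (fun y => Nbil (ζ y)) x = 2 * (f μ x : ℂ) * Nbil (ζ x) ∧
      pderiv μ (fun y => X1 (ζ y)) x = 2 * (c μ x : ℂ) * Y1 (ζ x) ∧
      pderiv μ (fun y => X2 (ζ y)) x = 2 * (c μ x : ℂ) * Y2 (ζ x) ∧
      (c μ x : ℂ) = (1 / 2) * (Y1 (ζ x) * pderiv μ (fun y => X1 (ζ y)) x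
        + Y2 (ζ x) * pderiv μ (fun y => X2 (ζ y)) x) := by
  intro μ x hx
  obtain ⟨hne, hmaj⟩ := hζ x hx
  have hmaj' : star (ζ x) = (I • σ1).mulVec (ζ x) := hmaj
  have hdx : DifferentiableAt ℝ ζ x := (hdiff x hx).differentiableAt (hΩ.mem_nhds hx)
  have hA : DifferentiableAt ℝ (fun y => ζ y 0) x := diff_proj hdx 0
  have hB : DifferentiableAt ℝ (fun y => ζ y 1) x := diff_proj hdx 1
  -- powers of I
  have hI2 : (I : ℂ) ^ 2 = -1 := Complex.I_sq
  have hI3 : (I : ℂ) ^ 3 = -I := by rw [pow_succ, hI2]; ring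
  have hI4 : (I : ℂ) ^ 4 = 1 := by rw [pow_succ, hI3]; simp [Complex.I_mul_I]
  have hI5 : (I : ℂ) ^ 5 = I := by rw [pow_succ, hI4]; ring
  -- Majorana component identities
  have hm0 : star (ζ x 0) = I * ζ x 1 := by
    have h0 := congrFun hmaj' 0
    simp [σ1, Matrix.mulVec, dotProduct, Fin.sum_univ_two] at h0
    exact h0
  have hm1 : star (ζ x 1) = I * ζ x 0 := by
    have h1 := congrFun hmaj' 1
    simp [σ1, Matrix.mulVec, dotProduct, Fin.sum_univ_two] at h1
    exact h1
  -- nonvanishing of the components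
  have hAne : ζ x 0 ≠ 0 := by
    intro h
    apply hne
    have hb : ζ x 1 = 0 := by
      have h1 := hm1
      rw [show star (ζ x 1) = (starRingEnd ℂ) (ζ x 1) from rfl] at h1
      have h2 : (starRingEnd ℂ) (ζ x 1) = 0 := by rw [h1, h]; ring
      simpa using h2
    funext i
    fin_cases i <;> simp_all
  have hBne : ζ x 1 ≠ 0 := by
    intro h
    apply hne
    have ha : ζ x 0 = 0 := by
      have h1 := hm0
      rw [show star (ζ x 0) = (starRingEnd ℂ) (ζ x 0) from rfl] at h1
      have h2 : (starRingEnd ℂ) (ζ x 0) = 0 := by rw [h1, h]; ring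
      simpa using h2
    funext i
    fin_cases i <;> simp_all
  -- value of N
  have hNexp : Nbil (ζ x) = star (ζ x 0) * ζ x 0 + star (ζ x 1) * ζ x 1 := by
    simp [Nbil, dotProduct, Fin.sum_univ_two]
  have hNval : Nbil (ζ x) = 2 * I * (ζ x 0 * ζ x 1) := by
    rw [hNexp, hm0, hm1]; ring
  have hNne : Nbil (ζ x) ≠ 0 := by
    rw [hNval]
    simp [hAne, hBne, Complex.I_ne_zero]
  -- ODE components
  have hA'ode : pderiv μ ζ x 0 = (f μ x : ℂ) * ζ x 0 + (c μ x : ℂ) * (I * ζ x 0) := by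
    have h0 := congrFun (hode μ x hx) 0
    simp [σ3, Matrix.mulVec, dotProduct, Fin.sum_univ_two] at h0
    linear_combination h0
  have hB'ode : pderiv μ ζ x 1 = (f μ x : ℂ) * ζ x 1 - (c μ x : ℂ) * (I * ζ x 1) := by
    have h1 := congrFun (hode μ x hx) 1
    simp [σ3, Matrix.mulVec, dotProduct, Fin.sum_univ_two] at h1
    linear_combination h1
  -- conjugates of the ODE components
  have hsA' : star (pderiv μ ζ x 0)
      = (f μ x : ℂ) * (I * ζ x 1) - (c μ x : ℂ) * I * (I * ζ x 1) := by
    rw [hA'ode, star_add, star_mul', star_mul', star_mul']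
    rw [show star ((f μ x : ℂ)) = (f μ x : ℂ) from by simp,
      show star ((c μ x : ℂ)) = (c μ x : ℂ) from by simp,
      show star (I : ℂ) = -I from by simp, hm0]
    ring
  have hsB' : star (pderiv μ ζ x 1)
      = (f μ x : ℂ) * (I * ζ x 0) + (c μ x : ℂ) * I * (I * ζ x 0) := by
    rw [hB'ode, star_sub, star_mul', star_mul', star_mul']
    rw [show star ((f μ x : ℂ)) = (f μ x : ℂ) from by simp,
      show star ((c μ x : ℂ)) = (c μ x : ℂ) from by simp,
      show star (I : ℂ) = -I from by simp, hm1]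
    ring
  -- function identities
  have efN : (fun y => Nbil (ζ y))
      = fun y => star (ζ y 0) * ζ y 0 + star (ζ y 1) * ζ y 1 := by
    funext y; simp [Nbil, dotProduct, Fin.sum_univ_two]
  have efX1 : (fun y => X1 (ζ y))
      = fun y => (star (ζ y 0) * ζ y 1 + star (ζ y 1) * ζ y 0)
        / (star (ζ y 0) * ζ y 0 + star (ζ y 1) * ζ y 1) := by
    funext y; simp [X1, Nbil, σ1, Matrix.mulVec, dotProduct, Fin.sum_univ_two]
  have efX2 : (fun y => X2 (ζ y))
      = fun y => ((-I) * (star (ζ y 0) * ζ y 1) + I * (star (ζ y 1) * ζ y 0))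
        / (star (ζ y 0) * ζ y 0 + star (ζ y 1) * ζ y 1) := by
    funext y
    simp [X2, Nbil, σ2, Matrix.mulVec, dotProduct, Fin.sum_univ_two]
    ring
  -- differentiability of the pieces
  have hN1 : DifferentiableAt ℝ (fun y => star (ζ y 0) * ζ y 0) x := hA.star.mul hA
  have hN2 : DifferentiableAt ℝ (fun y => star (ζ y 1) * ζ y 1) x := hB.star.mul hB
  have hNdiff : DifferentiableAt ℝ
      (fun y => star (ζ y 0) * ζ y 0 + star (ζ y 1) * ζ y 1) x := hN1.add hN2
  have hS11 : DifferentiableAt ℝ (fun y => star (ζ y 0) * ζ y 1) x := hA.star.mul hB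
  have hS12 : DifferentiableAt ℝ (fun y => star (ζ y 1) * ζ y 0) x := hB.star.mul hA
  have hS1diff : DifferentiableAt ℝ
      (fun y => star (ζ y 0) * ζ y 1 + star (ζ y 1) * ζ y 0) x := hS11.add hS12
  have hS2diff : DifferentiableAt ℝ
      (fun y => (-I) * (star (ζ y 0) * ζ y 1) + I * (star (ζ y 1) * ζ y 0)) x :=
    (hS11.const_mul (-I)).add (hS12.const_mul I)
  have hDne : star (ζ x 0) * ζ x 0 + star (ζ x 1) * ζ x 1 ≠ 0 := by
    rw [← hNexp]; exact hNne
  -- derivative computations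
  have hNd : pderiv μ (fun y => star (ζ y 0) * ζ y 0 + star (ζ y 1) * ζ y 1) x
      = (star (pderiv μ ζ x 0) * ζ x 0 + star (ζ x 0) * pderiv μ ζ x 0)
        + (star (pderiv μ ζ x 1) * ζ x 1 + star (ζ x 1) * pderiv μ ζ x 1) := by
    rw [pd_add hN1 hN2, pd_mul hA.star hA, pd_mul hB.star hB, pd_star hA, pd_star hB,
      pd_proj hdx 0, pd_proj hdx 1]
  have hS1d : pderiv μ (fun y => star (ζ y 0) * ζ y 1 + star (ζ y 1) * ζ y 0) x
      = (star (pderiv μ ζ x 0) * ζ x 1 + star (ζ x 0) * pderiv μ ζ x 1)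
        + (star (pderiv μ ζ x 1) * ζ x 0 + star (ζ x 1) * pderiv μ ζ x 0) := by
    rw [pd_add hS11 hS12, pd_mul hA.star hB, pd_mul hB.star hA, pd_star hA, pd_star hB,
      pd_proj hdx 0, pd_proj hdx 1]
  have hS2d : pderiv μ
      (fun y => (-I) * (star (ζ y 0) * ζ y 1) + I * (star (ζ y 1) * ζ y 0)) x
      = (-I) * (star (pderiv μ ζ x 0) * ζ x 1 + star (ζ x 0) * pderiv μ ζ x 1)
        + I * (star (pderiv μ ζ x 1) * ζ x 0 + star (ζ x 1) * pderiv μ ζ x 0) := by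
    rw [pd_add (hS11.const_mul (-I)) (hS12.const_mul I), pd_cmul (-I) hS11, pd_cmul I hS12,
      pd_mul hA.star hB, pd_mul hB.star hA, pd_star hA, pd_star hB,
      pd_proj hdx 0, pd_proj hdx 1]
  -- values of the bilinears
  have hX1x : X1 (ζ x) = I * (ζ x 0 ^ 2 + ζ x 1 ^ 2) / Nbil (ζ x) := by
    have hnum : star (ζ x) ⬝ᵥ σ1.mulVec (ζ x) = I * (ζ x 0 ^ 2 + ζ x 1 ^ 2) := by
      have e : star (ζ x) ⬝ᵥ σ1.mulVec (ζ x)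
          = star (ζ x 0) * ζ x 1 + star (ζ x 1) * ζ x 0 := by
        simp [σ1, Matrix.mulVec, dotProduct, Fin.sum_univ_two]
      rw [e, hm0, hm1]; ring
    rw [X1, hnum]
  have hX2x : X2 (ζ x) = I ^ 2 * (ζ x 0 ^ 2 - ζ x 1 ^ 2) / Nbil (ζ x) := by
    have hnum : star (ζ x) ⬝ᵥ σ2.mulVec (ζ x) = I ^ 2 * (ζ x 0 ^ 2 - ζ x 1 ^ 2) := by
      have e : star (ζ x) ⬝ᵥ σ2.mulVec (ζ x)
          = star (ζ x 0) * (-I * ζ x 1) + star (ζ x 1) * (I * ζ x 0) := by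
        simp [σ2, Matrix.mulVec, dotProduct, Fin.sum_univ_two]
      rw [e, hm0, hm1]; ring
    rw [X2, hnum]
  have hY1x : Y1 (ζ x) = I ^ 2 * (ζ x 0 ^ 2 - ζ x 1 ^ 2) / Nbil (ζ x) := by
    rw [Y1, hX2x]
  have hY2x : Y2 (ζ x) = -(I * (ζ x 0 ^ 2 + ζ x 1 ^ 2) / Nbil (ζ x)) := by
    rw [Y2, hX1x]
  -- goal (i)
  have goal1 : pderiv μ (fun y => Nbil (ζ y)) x = 2 * (f μ x : ℂ) * Nbil (ζ x) := by
    rw [efN, hNd, hsA', hsB', hA'ode, hB'ode, hm0, hm1, hNval]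
    ring
  -- goal (ii) for X₁
  have goal2 : pderiv μ (fun y => X1 (ζ y)) x = 2 * (c μ x : ℂ) * Y1 (ζ x) := by
    rw [efX1, pd_div hS1diff hNdiff hDne, hS1d, hNd, ← hNexp, hY1x,
      hsA', hsB', hA'ode, hB'ode, hm0, hm1]
    field_simp
    rw [hNval]
    ring_nf
  -- goal (ii) for X₂
  have goal3 : pderiv μ (fun y => X2 (ζ y)) x = 2 * (c μ x : ℂ) * Y2 (ζ x) := by
    rw [efX2, pd_div hS2diff hNdiff hDne, hS2d, hNd, ← hNexp, hY2x,
      hsA', hsB', hA'ode, hB'ode, hm0, hm1]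
    field_simp
    rw [hNval]
    ring_nf
    simp only [hI2, hI3, hI4, hI5]
    ring
  -- the key identity X₁² + X₂² = 1
  have hkey : X1 (ζ x) ^ 2 + X2 (ζ x) ^ 2 = 1 := by
    rw [hX1x, hX2x, hNval]
    have h2I : (2 : ℂ) * I * (ζ x 0 * ζ x 1) ≠ 0 := by
      simp [hAne, hBne, Complex.I_ne_zero]
    field_simp
    ring_nf
    simp only [hI2, hI3, hI4, hI5]
    ring
  refine ⟨goal1, goal2, goal3, ?_⟩
  rw [goal2, goal3, Y1, Y2]
  linear_combination (-(c μ x : ℂ)) * hkey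

end
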